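/- Let Θ be a discrete regular distribution with survival function S and reserve price r. Then for any u ≤ v < r in the support of Θ: (1) u·S(u) ≥ ((1 - S(u))/(1 - S(v))) · v·S(v), and (2) u·S(u) ≤ v·S(v). -/

import Mathlib

open Finset

/-- Survival function of a discrete distribution. -/
noncomputable def surv {k : ℕ} (f : Fin k → ℝ) (i : Fin k) : ℝ :=
  ∑ j ∈ Finset.univ.filter (fun j => i ≤ j), f j

/-- Myerson virtual value of a discrete distribution with support `z` and mass `f`. -/
noncomputable def vv {k : ℕ} (z f : Fin k → ℝ) (i : Fin k) : ℝ :=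
  if h : i.1 + 1 < k then
    z i - (z ⟨i.1 + 1, h⟩ - z i) * surv f ⟨i.1 + 1, h⟩ / f i
  else z i

lemma surv_succ {k : ℕ} (f : Fin k → ℝ) (t : Fin k) (h : t.1 + 1 < k) :
    surv f t = f t + surv f ⟨t.1 + 1, h⟩ := by
  unfold surv
  have hset : Finset.univ.filter (fun j : Fin k => t ≤ j)
      = insert t (Finset.univ.filter (fun j : Fin k => (⟨t.1 + 1, h⟩ : Fin k) ≤ j)) := by
    ext x
    simp only [Finset.mem_filter, Finset.mem_univ, true_and, Finset.mem_insert,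
      Fin.le_def, Fin.ext_iff]
    omega
  rw [hset, Finset.sum_insert (by
    simp only [Finset.mem_filter, Finset.mem_univ, true_and, Fin.le_def]; omega)]

lemma Rstep {k : ℕ} (z f : Fin k → ℝ) (hf : ∀ i, 0 < f i) (t : Fin k) (h : t.1 + 1 < k) :
    z t * surv f t - z ⟨t.1 + 1, h⟩ * surv f ⟨t.1 + 1, h⟩ = f t * vv z f t := by
  have hft : f t ≠ 0 := (hf t).ne'
  rw [vv, dif_pos h, surv_succ f t h]
  field_simp
  ring

lemma tele {k : ℕ} (G g : Fin k → ℝ)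
    (hstep : ∀ (t : Fin k) (h : t.1 + 1 < k), G t - G ⟨t.1 + 1, h⟩ = g t) :
    ∀ (n : ℕ) (a b : Fin k), b.1 = a.1 + n →
      G a - G b = ∑ t ∈ Finset.univ.filter (fun t => a ≤ t ∧ t < b), g t := by
  intro n
  induction n with
  | zero =>
    intro a b hab
    have hab' : a = b := Fin.ext (by omega)
    subst hab'
    have hempty : Finset.univ.filter (fun t : Fin k => a ≤ t ∧ t < a) = ∅ := by
      ext x
      simp only [Finset.mem_filter, Finset.mem_univ, true_and, Finset.notMem_empty,
        iff_false, not_and, Fin.le_def, Fin.lt_def]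
      omega
    simp [hempty]
  | succ n ih =>
    intro a b hab
    have ha1 : a.1 + 1 < k := by have := b.isLt; omega
    have h2 := ih ⟨a.1 + 1, ha1⟩ b (by simp only []; omega)
    have hset : Finset.univ.filter (fun t : Fin k => a ≤ t ∧ t < b)
        = insert a (Finset.univ.filter
            (fun t : Fin k => (⟨a.1 + 1, ha1⟩ : Fin k) ≤ t ∧ t < b)) := by
      ext x
      simp only [Finset.mem_filter, Finset.mem_univ, true_and, Finset.mem_insert,
        Fin.le_def, Fin.lt_def, Fin.ext_iff]
      omega
    rw [hset, Finset.sum_insert (by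
      simp only [Finset.mem_filter, Finset.mem_univ, true_and, not_and, Fin.le_def,
        Fin.lt_def]
      omega)]
    have h1 := hstep a ha1
    linarith

/-- For a discrete regular distribution `Θ` with reserve price `r` and support
values `u ≤ v < r` (indices `i ≤ j`), with `S(v) < 1`:
(1) `u·S(u) ≥ ((1 − S(u))/(1 − S(v))) · v·S(v)`, and (2) `u·S(u) ≤ v·S(v)`. -/
theorem stmt4 (k : ℕ) (hk : 0 < k) (z f : Fin k → ℝ)
    (hz : StrictMono z) (hzpos : ∀ i, 0 < z i)
    (hf : ∀ i, 0 < f i) (hsum : ∑ i, f i = 1)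
    (hreg : Monotone (vv z f))
    (r : Fin k)
    (hrmax : ∀ i, z i * surv f i ≤ z r * surv f r)
    (hrmin : ∀ i, z i * surv f i = z r * surv f r → r ≤ i)
    (i j : Fin k) (hij : i ≤ j) (hjr : z j < z r)
    (hSv : surv f j < 1) :
    (1 - surv f i) / (1 - surv f j) * (z j * surv f j) ≤ z i * surv f i ∧
    z i * surv f i ≤ z j * surv f j := by
  have teleR : ∀ a b : Fin k, a ≤ b →
      z a * surv f a - z b * surv f b
        = ∑ t ∈ Finset.univ.filter (fun t => a ≤ t ∧ t < b), f t * vv z f t := by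
    intro a b hab
    exact tele (fun t => z t * surv f t) (fun t => f t * vv z f t)
      (fun t h => Rstep z f hf t h) (b.1 - a.1) a b
      (by have := Fin.le_def.mp hab; omega)
  have teleS : ∀ a b : Fin k, a ≤ b →
      surv f a - surv f b = ∑ t ∈ Finset.univ.filter (fun t => a ≤ t ∧ t < b), f t := by
    intro a b hab
    exact tele (surv f) f (fun t h => by have := surv_succ f t h; linarith)
      (b.1 - a.1) a b (by have := Fin.le_def.mp hab; omega)
  set i0 : Fin k := ⟨0, hk⟩ with hi0_def
  have hSi0 : surv f i0 = 1 := by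
    rw [← hsum]; unfold surv
    congr 1
    ext x; simp only [Finset.mem_filter, Finset.mem_univ, true_and, iff_true]; exact Fin.le_def.mpr (Nat.zero_le _)
  have hi0i : i0 ≤ i := by exact Fin.le_def.mpr (Nat.zero_le _)
  have hjr2 : j < r := hz.lt_iff_lt.mp hjr
  -- virtual values are nonpositive strictly below r
  have vvneg : ∀ t : Fin k, t < r → vv z f t ≤ 0 := by
    intro t htr
    by_contra hpos
    push_neg at hpos
    have h1 := teleR t r htr.le
    have h2 : 0 < ∑ s ∈ Finset.univ.filter (fun s => t ≤ s ∧ s < r), f s * vv z f s := by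
      apply Finset.sum_pos
      · intro s hs
        have hts : t ≤ s := (Finset.mem_filter.mp hs).2.1
        exact mul_pos (hf s) (lt_of_lt_of_le hpos (hreg hts))
      · exact ⟨t, by simp [Finset.mem_filter, htr]⟩
    have := hrmax t
    linarith
  have hP := teleR i0 i hi0i
  have hQ := teleR i j hij
  have hA := teleS i0 i hi0i
  have hB := teleS i j hij
  have hApos : 0 ≤ ∑ t ∈ Finset.univ.filter (fun t => i0 ≤ t ∧ t < i), f t :=
    Finset.sum_nonneg fun t _ => (hf t).le
  have hBpos : 0 ≤ ∑ t ∈ Finset.univ.filter (fun t => i ≤ t ∧ t < j), f t :=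
    Finset.sum_nonneg fun t _ => (hf t).le
  -- Chebyshev-type inequality from monotonicity of virtual values
  have key : (∑ t ∈ Finset.univ.filter (fun t => i ≤ t ∧ t < j), f t)
        * (∑ t ∈ Finset.univ.filter (fun t => i0 ≤ t ∧ t < i), f t * vv z f t)
      ≤ (∑ t ∈ Finset.univ.filter (fun t => i0 ≤ t ∧ t < i), f t)
        * (∑ t ∈ Finset.univ.filter (fun t => i ≤ t ∧ t < j), f t * vv z f t) := by
    rw [mul_comm ((∑ t ∈ Finset.univ.filter (fun t => i ≤ t ∧ t < j), f t)) _,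
      Finset.sum_mul, Finset.sum_mul]
    apply Finset.sum_le_sum
    intro s hs
    have hsi : s < i := (Finset.mem_filter.mp hs).2.2
    have hQs : vv z f s * (∑ t ∈ Finset.univ.filter (fun t => i ≤ t ∧ t < j), f t)
        ≤ ∑ t ∈ Finset.univ.filter (fun t => i ≤ t ∧ t < j), f t * vv z f t := by
      rw [Finset.mul_sum]
      apply Finset.sum_le_sum
      intro t ht
      have hit : i ≤ t := (Finset.mem_filter.mp ht).2.1
      have hst : s ≤ t := le_trans hsi.le hit
      have hvv := hreg hst
      nlinarith [hf t]
    calc f s * vv z f s * (∑ t ∈ Finset.univ.filter (fun t => i ≤ t ∧ t < j), f t)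
        = f s * (vv z f s * (∑ t ∈ Finset.univ.filter (fun t => i ≤ t ∧ t < j), f t)) := by
          ring
      _ ≤ f s * (∑ t ∈ Finset.univ.filter (fun t => i ≤ t ∧ t < j), f t * vv z f t) :=
          mul_le_mul_of_nonneg_left hQs (hf s).le
  -- rewrite key in terms of the original quantities
  have key' : (surv f i - surv f j) * (z i0 * surv f i0 - z i * surv f i)
      ≤ (surv f i0 - surv f i) * (z i * surv f i - z j * surv f j) := by
    rw [hA, hB, hP, hQ]; exact key
  have hab : 0 ≤ surv f i - surv f j := by rw [hB]; exact hBpos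
  have ha1 : 0 ≤ surv f i0 - surv f i := by rw [hA]; exact hApos
  have hr0 : 0 < z i0 * surv f i0 := by rw [hSi0]; simpa using hzpos i0
  constructor
  · rw [div_mul_eq_mul_div, div_le_iff₀ (by linarith : (0:ℝ) < 1 - surv f j)]
    have h2 : 0 ≤ (surv f i - surv f j) * (z i0 * surv f i0) :=
      mul_nonneg hab hr0.le
    have hSi1 : surv f i ≤ 1 := by linarith
    rw [hSi0, mul_one] at key' h2 hr0
    nlinarith [key', h2]
  · have hQ2 : (∑ t ∈ Finset.univ.filter (fun t => i ≤ t ∧ t < j), f t * vv z f t) ≤ 0 := by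
      apply Finset.sum_nonpos
      intro t ht
      have htj : t < j := (Finset.mem_filter.mp ht).2.2
      exact mul_nonpos_of_nonneg_of_nonpos (hf t).le (vvneg t (lt_trans htj hjr2))
    linarith [hQ]
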